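/- Let A be a Z-graded algebra over a commutative ring K, d an integer, and ⟪-,-⟫ a d-graded bibracket on A (a bibracket of degree d satisfying both d-graded Leibniz rules). Define the associated bracket ⟨a,b⟩ = ⟪a,b⟫' ⟪a,b⟫'' ∈ A (the product of the two tensor components). Then for all homogeneous a, b, c in A, one has ⟨ab, c⟩ = (-1)^{|a||b|} ⟨ba, c⟩. Consequently, ⟨[A,A], A⟩ = 0, where [A,A] is the submodule spanned by graded commutators ab - (-1)^{|a||b|} ba. -/

import Mathlib

open scoped TensorProduct

noncomputable section

/-- The sign `(-1)^n`, for `n : ℤ`, as an element of the commutative ring `K`. -/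
def sgn (K : Type*) [CommRing K] (n : ℤ) : K := ((n.negOnePow : ℤ) : K)

variable {K : Type*} [CommRing K] {A : Type*} [Ring A] [Algebra K A]
variable (𝒜 : ℤ → Submodule K A) [GradedAlgebra 𝒜]

/-- The `K`-linear endomorphism of `A` multiplying the degree-`p` component by `(-1)^{p·k}`. -/
def twist (k : ℤ) : A →ₗ[K] A :=
  (DirectSum.toModule K ℤ A fun p => sgn K (p * k) • (𝒜 p).subtype) ∘ₗ
    (DirectSum.decomposeAlgEquiv 𝒜).toLinearMap

/-- The graded flip `P₂₁` of `A ⊗ A`, sending `x' ⊗ x''` (with `x', x''` homogeneous)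
to `(-1)^{|x'||x''|} x'' ⊗ x'`. -/
def gflip : A ⊗[K] A →ₗ[K] A ⊗[K] A :=
  TensorProduct.lift
    ((DirectSum.toModule K ℤ (A →ₗ[K] A ⊗[K] A) fun p =>
        ((LinearMap.llcomp K A A (A ⊗[K] A)).flip (twist 𝒜 p)).comp
          ((TensorProduct.mk K A A).flip.comp (𝒜 p).subtype)) ∘ₗ
      (DirectSum.decomposeAlgEquiv 𝒜).toLinearMap)

/-- The `d`-graded flip `P₂₁,d`, sending `a ⊗ b` (homogeneous) to
`(-1)^{(|a|+d)(|b|+d)} b ⊗ a`. -/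
def P21d (d : ℤ) : A ⊗[K] A →ₗ[K] A ⊗[K] A :=
  sgn K (d * d) • (gflip 𝒜 ∘ₗ TensorProduct.map (twist 𝒜 d) (twist 𝒜 d))

/-- Outer left action of `A` on `A ⊗ A`: `a ⬝ (x' ⊗ x'') = (a x') ⊗ x''`. -/
def outL (a : A) : A ⊗[K] A →ₗ[K] A ⊗[K] A := LinearMap.rTensor A (LinearMap.mulLeft K a)

/-- Outer right action of `A` on `A ⊗ A`: `(x' ⊗ x'') ⬝ b = x' ⊗ (x'' b)`. -/
def outR (b : A) : A ⊗[K] A →ₗ[K] A ⊗[K] A := LinearMap.lTensor A (LinearMap.mulRight K b)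

/-- Inner left action of a homogeneous `a` of degree `p` on `A ⊗ A`:
`a * (x' ⊗ x'') = (-1)^{|a||x'|} x' ⊗ (a x'')`. -/
def innL (p : ℤ) (a : A) : A ⊗[K] A →ₗ[K] A ⊗[K] A :=
  (LinearMap.lTensor A (LinearMap.mulLeft K a)) ∘ₗ (LinearMap.rTensor A (twist 𝒜 p))

/-- Inner right action of a homogeneous `b` of degree `q` on `A ⊗ A`:
`(x' ⊗ x'') * b = (-1)^{|b||x''|} (x' b) ⊗ x''`. -/
def innR (q : ℤ) (b : A) : A ⊗[K] A →ₗ[K] A ⊗[K] A :=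
  (LinearMap.rTensor A (LinearMap.mulRight K b)) ∘ₗ (LinearMap.lTensor A (twist 𝒜 q))

/-- The degree-`n` part `⊕_{i+j=n} A^i ⊗ A^j` of `A ⊗ A`, as the span of
homogeneous pure tensors of total degree `n`. -/
def degSub (n : ℤ) : Submodule K (A ⊗[K] A) :=
  Submodule.span K
    {z | ∃ (i j : ℤ) (x' x'' : A), i + j = n ∧ x' ∈ 𝒜 i ∧ x'' ∈ 𝒜 j ∧ z = x' ⊗ₜ[K] x''}

lemma sgn_add' (K : Type*) [CommRing K] (m n : ℤ) : sgn K (m + n) = sgn K m * sgn K n := by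
  simp [sgn, Int.negOnePow_add]

lemma sgn_congr (K : Type*) [CommRing K] {m n : ℤ} (h : Even (m - n)) : sgn K m = sgn K n := by
  simp [sgn, (Int.negOnePow_eq_iff m n).2 h]

lemma twist_apply {p : ℤ} {x : A} (hx : x ∈ 𝒜 p) (k : ℤ) :
    twist 𝒜 k x = sgn K (p * k) • x := by
  rw [twist, LinearMap.comp_apply]
  have : (DirectSum.decomposeAlgEquiv 𝒜).toLinearMap x
      = DirectSum.lof K ℤ (fun i => 𝒜 i) p ⟨x, hx⟩ := by
    simp [DirectSum.decompose_of_mem 𝒜 hx, DirectSum.lof_eq_of]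
  rw [this, DirectSum.toModule_lof]
  rfl

lemma key (n p : ℤ) (a : A) {z : A ⊗[K] A} (hz : z ∈ degSub 𝒜 n) :
    LinearMap.mul' K A (innL 𝒜 p a z) = sgn K (p * n) • LinearMap.mul' K A (innR 𝒜 p a z) := by
  induction hz using Submodule.span_induction with
  | mem z hz =>
    obtain ⟨i, j, x', x'', hij, hx', hx'', rfl⟩ := hz
    have e1 : innL 𝒜 p a (x' ⊗ₜ[K] x'') = sgn K (i * p) • (x' ⊗ₜ[K] (a * x'')) := by
      rw [innL, LinearMap.comp_apply, LinearMap.rTensor_tmul, twist_apply 𝒜 hx',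
        ← TensorProduct.smul_tmul', map_smul, LinearMap.lTensor_tmul,
        LinearMap.mulLeft_apply]
    have e2 : innR 𝒜 p a (x' ⊗ₜ[K] x'') = sgn K (j * p) • ((x' * a) ⊗ₜ[K] x'') := by
      rw [innR, LinearMap.comp_apply, LinearMap.lTensor_tmul, twist_apply 𝒜 hx'',
        TensorProduct.tmul_smul, map_smul, LinearMap.rTensor_tmul,
        LinearMap.mulRight_apply]
    rw [e1, e2, map_smul, map_smul, LinearMap.mul'_apply, LinearMap.mul'_apply,
      smul_smul, mul_assoc]
    congr 1
    rw [← sgn_add']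
    exact sgn_congr K (by subst hij; exact ⟨-(j*p), by ring⟩)
  | zero => simp
  | add _ _ _ _ h1 h2 => simp only [map_add, h1, h2, smul_add]
  | smul r _ _ h => rw [map_smul, map_smul, h, map_smul, map_smul, smul_comm]


/-- for a `d`-graded bibracket, the associated bracket
`⟨a,b⟩ = ⟪a,b⟫'⟪a,b⟫''` satisfies `⟨ab,c⟩ = (-1)^{|a||b|}⟨ba,c⟩`; consequently it
vanishes on `[A,A]` in the first variable. -/
theorem stmt5 (d : ℤ) (F : A ⊗[K] A →ₗ[K] A ⊗[K] A)
    (hdeg : ∀ (p q : ℤ) (a b : A), a ∈ 𝒜 p → b ∈ 𝒜 q →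
      F (a ⊗ₜ[K] b) ∈ degSub 𝒜 (p + q + d))
    (hL1 : ∀ (pa pb : ℤ) (a b c : A), a ∈ 𝒜 pa → b ∈ 𝒜 pb →
      F (a ⊗ₜ[K] (b * c)) =
        outR c (F (a ⊗ₜ[K] b)) + sgn K ((pa + d) * pb) • outL b (F (a ⊗ₜ[K] c)))
    (hL2 : ∀ (pa pb pc : ℤ) (a b c : A), a ∈ 𝒜 pa → b ∈ 𝒜 pb → c ∈ 𝒜 pc →
      F ((a * b) ⊗ₜ[K] c) =
        innL 𝒜 pa a (F (b ⊗ₜ[K] c)) +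
          sgn K (pb * (pc + d)) • innR 𝒜 pb b (F (a ⊗ₜ[K] c))) :
    (∀ (pa pb pc : ℤ) (a b c : A), a ∈ 𝒜 pa → b ∈ 𝒜 pb → c ∈ 𝒜 pc →
        LinearMap.mul' K A (F ((a * b) ⊗ₜ[K] c)) =
          sgn K (pa * pb) • LinearMap.mul' K A (F ((b * a) ⊗ₜ[K] c))) ∧
    (∀ x ∈ Submodule.span K
        {z : A | ∃ (p q : ℤ) (u v : A), u ∈ 𝒜 p ∧ v ∈ 𝒜 q ∧
          z = u * v - sgn K (p * q) • (v * u)},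
      ∀ c : A, LinearMap.mul' K A (F (x ⊗ₜ[K] c)) = 0) := by
  have claim1 : ∀ (pa pb pc : ℤ) (a b c : A), a ∈ 𝒜 pa → b ∈ 𝒜 pb → c ∈ 𝒜 pc →
      LinearMap.mul' K A (F ((a * b) ⊗ₜ[K] c)) =
        sgn K (pa * pb) • LinearMap.mul' K A (F ((b * a) ⊗ₜ[K] c)) := by
    intro pa pb pc a b c ha hb hc
    rw [hL2 pa pb pc a b c ha hb hc, hL2 pb pa pc b a c hb ha hc]
    rw [map_add, map_add, map_smul, map_smul]
    rw [key 𝒜 _ pa a (hdeg pb pc b c hb hc), key 𝒜 _ pb b (hdeg pa pc a c ha hc)]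
    rw [smul_add, smul_smul, smul_smul, add_comm]
    congr 1
    · congr 1
      rw [← sgn_add']
      exact sgn_congr K ⟨-(pa * pb), by ring⟩
    · congr 1
      rw [← sgn_add']
      exact sgn_congr K ⟨0, by ring⟩
  refine ⟨claim1, ?_⟩
  intro x hx c
  induction hx using Submodule.span_induction with
  | mem z hz =>
    obtain ⟨p, q, u, v, hu, hv, rfl⟩ := hz
    induction c using DirectSum.Decomposition.inductionOn 𝒜 with
    | zero => simp
    | @homogeneous pc m =>
      rw [TensorProduct.sub_tmul, ← TensorProduct.smul_tmul', map_sub, map_smul, map_sub,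
        map_smul, claim1 p q pc u v m hu hv m.2, sub_self]
    | add c1 c2 h1 h2 =>
      rw [TensorProduct.tmul_add, map_add, map_add, h1, h2, add_zero]
  | zero => simp
  | add _ _ _ _ h1 h2 =>
    rw [TensorProduct.add_tmul, map_add, map_add, h1, h2, add_zero]
  | smul r _ _ h =>
    rw [← TensorProduct.smul_tmul', map_smul, map_smul, h, smul_zero]
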